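/- arXiv:2009.12038 — 2 statements merged into one kernel-verified Lean document; each statement's English description precedes it below -/
import Mathlib

section
/- Let A,B,C,D,p,q be real numbers with AD−BC=1 and B≠0, and set m_Λ(x) = exp{ iAx²/(2B) }. If f,g ∈ L¹(ℝ)∩L²(ℝ) and h(t) = (2π|B|)^{−1/2} (m_Λ(t))^* · ∫_ℝ m_Λ(x) f(x) · m_Λ(t−x) g(t−x) dx, then for every ω ∈ ℝ one has ĥ_Λ(ω) = Φ_Λ(ω) · f̂_Λ(ω) · ĝ_Λ(ω), where Φ_Λ(ω) = exp{ iω(Dp−Bq)/B } · exp{ −iDω²/(2B) }. -/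
open MeasureTheory Real Set

/-- The special affine Fourier transform (SAFT) with parameter matrix
`[[A, B], [C, D]]` and offset `(p, q)` (the kernel does not involve `C`). -/
noncomputable def SAFT (A B D p q : ℝ) (f : ℝ → ℂ) (ω : ℝ) : ℂ :=
  (Real.sqrt (2 * Real.pi * |B|) : ℂ)⁻¹ *
    ∫ x : ℝ, f x * Complex.exp ((Complex.I / (2 * (B : ℂ))) *
      ((A : ℂ) * (x : ℂ) ^ 2 + 2 * (x : ℂ) * ((p : ℂ) - (ω : ℂ))
        - 2 * (ω : ℂ) * ((D : ℂ) * (p : ℂ) - (B : ℂ) * (q : ℂ))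
        + (D : ℂ) * (ω : ℂ) ^ 2))

/-- SAFT convolution theorem: the SAFT of the SAFT-convolution `h` of `f` and `g`
is the product of their SAFTs times the phase factor `Φ_Λ`. -/
theorem saft_convolution_theorem (A B C D p q : ℝ) (hΛ : A * D - B * C = 1) (hB : B ≠ 0)
    (f g : ℝ → ℂ) (hf1 : Integrable f) (hf2 : MemLp f 2)
    (hg1 : Integrable g) (hg2 : MemLp g 2)
    (h : ℝ → ℂ)
    (hh : ∀ t : ℝ, h t = (Real.sqrt (2 * Real.pi * |B|) : ℂ)⁻¹ *
        (starRingEnd ℂ) (Complex.exp (Complex.I * (A : ℂ) * (t : ℂ) ^ 2 / (2 * (B : ℂ)))) *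
        ∫ x : ℝ, (Complex.exp (Complex.I * (A : ℂ) * (x : ℂ) ^ 2 / (2 * (B : ℂ))) * f x) *
          (Complex.exp (Complex.I * (A : ℂ) * ((t : ℂ) - (x : ℂ)) ^ 2 / (2 * (B : ℂ)))
            * g (t - x)))
    (ω : ℝ) :
    SAFT A B D p q h ω =
      (Complex.exp (Complex.I * (ω : ℂ) * ((D : ℂ) * (p : ℂ) - (B : ℂ) * (q : ℂ)) / (B : ℂ)) *
        Complex.exp (-(Complex.I * (D : ℂ) * (ω : ℂ) ^ 2) / (2 * (B : ℂ)))) *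
      SAFT A B D p q f ω * SAFT A B D p q g ω := by
  have hB' : (B : ℂ) ≠ 0 := Complex.ofReal_ne_zero.mpr hB
  set c : ℂ := (Real.sqrt (2 * Real.pi * |B|) : ℂ)⁻¹ with hc
  set m : ℝ → ℂ := fun x => Complex.exp (((A * x ^ 2 / (2 * B) : ℝ) : ℂ) * Complex.I) with hm
  set e : ℝ → ℂ := fun x => Complex.exp (((x * (p - ω) / B : ℝ) : ℂ) * Complex.I) with he
  set E : ℂ := Complex.exp (((-(ω * (D * p - B * q)) / B + D * ω ^ 2 / (2 * B) : ℝ) : ℂ)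
    * Complex.I) with hE
  -- kernel factorization
  have key : ∀ x : ℝ, Complex.exp ((Complex.I / (2 * (B : ℂ))) *
      ((A : ℂ) * (x : ℂ) ^ 2 + 2 * (x : ℂ) * ((p : ℂ) - (ω : ℂ))
        - 2 * (ω : ℂ) * ((D : ℂ) * (p : ℂ) - (B : ℂ) * (q : ℂ))
        + (D : ℂ) * (ω : ℂ) ^ 2)) = m x * e x * E := by
    intro x
    simp only [hm, he, hE]
    rw [← Complex.exp_add, ← Complex.exp_add]
    congr 1
    push_cast
    field_simp
    ring
  have hmeq : ∀ t : ℝ, Complex.exp (Complex.I * (A : ℂ) * (t : ℂ) ^ 2 / (2 * (B : ℂ))) = m t := by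
    intro t; simp only [hm]; congr 1; push_cast; ring
  have hmeq2 : ∀ t x : ℝ,
      Complex.exp (Complex.I * (A : ℂ) * ((t : ℂ) - (x : ℂ)) ^ 2 / (2 * (B : ℂ))) = m (t - x) := by
    intro t x; simp only [hm]; congr 1; push_cast; ring
  have hnorm : ∀ x : ℝ, ‖m x * e x‖ ≤ 1 := by
    intro x
    simp only [hm, he]
    rw [norm_mul,
      Complex.norm_exp_ofReal_mul_I, Complex.norm_exp_ofReal_mul_I, one_mul]
  have hcont : Continuous fun x : ℝ => m x * e x := by
    simp only [hm, he]; fun_prop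
  set F : ℝ → ℂ := fun x => (m x * e x) * f x with hF
  set G : ℝ → ℂ := fun x => (m x * e x) * g x with hG
  have hFint : Integrable F := hf1.bdd_mul hcont.aestronglyMeasurable (Filter.Eventually.of_forall hnorm)
  have hGint : Integrable G := hg1.bdd_mul hcont.aestronglyMeasurable (Filter.Eventually.of_forall hnorm)
  -- SAFT of f and g
  have hptf : ∀ x : ℝ, f x * (m x * e x * E) = E * F x := by
    intro x; simp only [hF]; ring
  have hptg : ∀ x : ℝ, g x * (m x * e x * E) = E * G x := by
    intro x; simp only [hG]; ring
  have hSf : SAFT A B D p q f ω = c * (E * ∫ x, F x) := by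
    rw [SAFT, ← hc]
    simp_rw [key, hptf, integral_const_mul]
  have hSg : SAFT A B D p q g ω = c * (E * ∫ x, G x) := by
    rw [SAFT, ← hc]
    simp_rw [key, hptg, integral_const_mul]
  -- conj(m t) * m t = 1
  have hconj : ∀ t : ℝ, (starRingEnd ℂ) (m t) * m t = 1 := by
    intro t
    simp only [hm]
    rw [← Complex.exp_conj, ← Complex.exp_add, map_mul, Complex.conj_ofReal, Complex.conj_I]
    rw [show ((A * t ^ 2 / (2 * B) : ℝ) : ℂ) * -Complex.I
        + ((A * t ^ 2 / (2 * B) : ℝ) : ℂ) * Complex.I = 0 by ring, Complex.exp_zero]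
  have he_add : ∀ t x : ℝ, e t = e x * e (t - x) := by
    intro t x
    simp only [he]
    rw [← Complex.exp_add]
    congr 1
    push_cast
    ring
  -- SAFT of h
  have hSh : SAFT A B D p q h ω = c * (c * E * ((∫ x, F x) * (∫ x, G x))) := by
    rw [SAFT, ← hc]
    have step1 : ∀ t : ℝ, h t * (m t * e t * E)
        = (c * E) * ∫ x, F x * G (t - x) := by
      intro t
      rw [hh t]
      simp_rw [hmeq, hmeq2]
      have inner : (∫ x : ℝ, m x * f x * (m (t - x) * g (t - x))) * (e t)
          = ∫ x, F x * G (t - x) := by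
        rw [mul_comm, ← integral_const_mul]
        refine integral_congr_ae (Filter.Eventually.of_forall fun x => ?_)
        rw [he_add t x]
        simp only [hF, hG]
        ring
      calc c * (starRingEnd ℂ) (m t) * (∫ x : ℝ, m x * f x * (m (t - x) * g (t - x)))
            * (m t * e t * E)
          = (c * E) * (((starRingEnd ℂ) (m t) * m t)
            * ((∫ x : ℝ, m x * f x * (m (t - x) * g (t - x))) * e t)) := by ring
        _ = (c * E) * ∫ x, F x * G (t - x) := by rw [hconj t, inner, one_mul]
    simp_rw [key, step1, integral_const_mul]
    have hconv : ∫ t : ℝ, ∫ x : ℝ, F x * G (t - x) = (∫ x, F x) * (∫ x, G x) := by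
      have := MeasureTheory.integral_convolution (L := ContinuousLinearMap.mul ℝ ℂ)
        (μ := volume) (ν := volume) hFint hGint
      simpa [convolution, ContinuousLinearMap.mul_apply'] using this
    rw [hconv]
  -- phase cancellation
  have hΦE : (Complex.exp (Complex.I * (ω : ℂ) * ((D : ℂ) * (p : ℂ) - (B : ℂ) * (q : ℂ)) / (B : ℂ)) *
      Complex.exp (-(Complex.I * (D : ℂ) * (ω : ℂ) ^ 2) / (2 * (B : ℂ)))) * E = 1 := by
    simp only [hE]
    rw [← Complex.exp_add, ← Complex.exp_add]
    rw [show Complex.I * (ω : ℂ) * ((D : ℂ) * (p : ℂ) - (B : ℂ) * (q : ℂ)) / (B : ℂ)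
        + -(Complex.I * (D : ℂ) * (ω : ℂ) ^ 2) / (2 * (B : ℂ))
        + ((-(ω * (D * p - B * q)) / B + D * ω ^ 2 / (2 * B) : ℝ) : ℂ) * Complex.I = 0 by
      push_cast; field_simp; ring]
    exact Complex.exp_zero
  rw [hSh, hSf, hSg]
  linear_combination (-(c * c * E * (∫ x, F x) * (∫ x, G x))) * hΦE
end

section
/- Let A,B,C,D,p,q be real numbers with AD−BC=1 and B≠0, let f,ψ ∈ L¹(ℝ)∩L²(ℝ), and fix ζ > 0. Then the SAFT in the variable t of the function t ↦ A_ψ f(t,ζ) satisfies, for every ω ∈ ℝ, F_SAFT[A_ψ f(·,ζ)](ω) = √ζ · exp{ (i/(2B))( 2ωζ(Dp−Bq) − Dω²ζ² ) } · f̂_Λ(ω) · Ψ̂_Λ(ζω, ζ), where Ψ(x,ζ) = exp{ (i/(2B))( Ax²(ζ²−1) + 2xp(ζ−1) ) } ψ^*(−x) and Ψ̂_Λ(·,ζ) is the SAFT of Ψ(·,ζ) in its first variable. -/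
open MeasureTheory Real Set

/-- The auxiliary analyzing function `Ψ(x, ζ)` built from the wavelet `ψ`. -/
noncomputable def bigPsi (A B p : ℝ) (ψ : ℝ → ℂ) (ζ : ℝ) (x : ℝ) : ℂ :=
  Complex.exp ((Complex.I / (2 * (B : ℂ))) *
      ((A : ℂ) * (x : ℂ) ^ 2 * ((ζ : ℂ) ^ 2 - 1) + 2 * (x : ℂ) * (p : ℂ) * ((ζ : ℂ) - 1))) *
    (starRingEnd ℂ) (ψ (-x))

/-- The analyzing window of the novel special affine wavelet transform. -/
noncomputable def waveWindow (A B : ℝ) (ψ : ℝ → ℂ) (t ζ : ℝ) (x : ℝ) : ℂ :=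
  ((Real.sqrt (2 * Real.pi * |B|))⁻¹ * (Real.sqrt ζ)⁻¹ : ℝ) *
    ψ ((x - t) / ζ) *
    Complex.exp (Complex.I * (A : ℂ) * (x : ℂ) * ((t : ℂ) - (x : ℂ)) / (B : ℂ))

/-- The novel special affine wavelet transform (NSAWT). -/
noncomputable def NSAWT (A B : ℝ) (ψ : ℝ → ℂ) (f : ℝ → ℂ) (t ζ : ℝ) : ℂ :=
  ∫ x : ℝ, f x * (starRingEnd ℂ) (waveWindow A B ψ t ζ x)

lemma expK_mul (K : ℂ) (r s : ℝ) :
    Complex.exp (K * (r : ℂ)) * Complex.exp (K * (s : ℂ))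
      = Complex.exp (K * ((r + s : ℝ) : ℂ)) := by
  rw [← Complex.exp_add]; push_cast; ring_nf

lemma norm_expK (B r : ℝ) : ‖Complex.exp (Complex.I / (2 * (B : ℂ)) * (r : ℂ))‖ = 1 := by
  have h : Complex.I / (2 * (B : ℂ)) * (r : ℂ) = ((r / (2 * B) : ℝ) : ℂ) * Complex.I := by
    push_cast; ring
  rw [h, Complex.norm_exp_ofReal_mul_I]

/-- Relationship between the SAFT and the NSAWT: the SAFT (in the time variable)
of the NSAWT factorizes as a phase times the SAFTs of `f` and `Ψ(·, ζ)`. -/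
theorem saft_of_nsawt (A B C D p q : ℝ) (hΛ : A * D - B * C = 1) (hB : B ≠ 0)
    (f ψ : ℝ → ℂ) (hf1 : Integrable f) (hf2 : MemLp f 2)
    (hψ1 : Integrable ψ) (hψ2 : MemLp ψ 2)
    (ζ : ℝ) (hζ : 0 < ζ) (ω : ℝ) :
    SAFT A B D p q (fun t : ℝ => NSAWT A B ψ f t ζ) ω
      = (Real.sqrt ζ : ℂ) *
        Complex.exp ((Complex.I / (2 * (B : ℂ))) *
          (2 * (ω : ℂ) * (ζ : ℂ) * ((D : ℂ) * (p : ℂ) - (B : ℂ) * (q : ℂ))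
            - (D : ℂ) * (ω : ℂ) ^ 2 * (ζ : ℂ) ^ 2)) *
        SAFT A B D p q f ω * SAFT A B D p q (bigPsi A B p ψ ζ) (ζ * ω) := by
  have hζ' : ζ ≠ 0 := hζ.ne'
  set K : ℂ := Complex.I / (2 * (B : ℂ)) with hKdef
  set cB : ℝ := (Real.sqrt (2 * Real.pi * |B|))⁻¹ with hcB
  set sζ : ℝ := (Real.sqrt ζ)⁻¹ with hsζ
  set ker : ℝ → ℝ → ℂ := fun w t =>
    Complex.exp (K * ((A * t ^ 2 + 2 * t * (p - w) - 2 * w * (D * p - B * q) + D * w ^ 2 : ℝ) : ℂ))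
    with hkerdef
  set e1 : ℝ → ℝ → ℂ := fun t x =>
    Complex.exp (K * ((2 * A * x ^ 2 - 2 * A * x * t : ℝ) : ℂ)) with he1def
  set phase : ℂ :=
    Complex.exp (K * ((2 * ω * ζ * (D * p - B * q) - D * ω ^ 2 * ζ ^ 2 : ℝ) : ℂ)) with hphasedef
  -- SAFT in terms of ker
  have hSAFT : ∀ (g : ℝ → ℂ) (w : ℝ),
      SAFT A B D p q g w = (cB : ℂ) * ∫ t : ℝ, g t * ker w t := by
    intro g w
    rw [SAFT, hcB, Complex.ofReal_inv]
    congr 1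
    refine integral_congr_ae (Filter.Eventually.of_forall fun t => ?_)
    congr 1
    rw [hkerdef]
    congr 1
    push_cast
    ring
  -- conjugate of the window
  have hconjW : ∀ t x : ℝ, (starRingEnd ℂ) (waveWindow A B ψ t ζ x)
      = ((cB * sζ : ℝ) : ℂ) * ((starRingEnd ℂ) (ψ ((x - t) / ζ)) * e1 t x) := by
    intro t x
    rw [waveWindow, map_mul, map_mul, Complex.conj_ofReal, mul_assoc]
    congr 2
    rw [← Complex.exp_conj]
    congr 1
    simp only [map_mul, map_div₀, Complex.conj_I, Complex.conj_ofReal, map_sub,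
      map_ofNat]
    rw [hKdef]
    have hB' : (B : ℂ) ≠ 0 := Complex.ofReal_ne_zero.mpr hB
    push_cast
    field_simp
    ring
  -- bigPsi in terms of a real-cast exponent
  have hbigPsi : ∀ y : ℝ, bigPsi A B p ψ ζ y
      = Complex.exp (K * ((A * y ^ 2 * (ζ ^ 2 - 1) + 2 * y * p * (ζ - 1) : ℝ) : ℂ)) *
          (starRingEnd ℂ) (ψ (-y)) := by
    intro y
    have harg : (A : ℂ) * (y:ℂ) ^ 2 * ((ζ:ℂ) ^ 2 - 1) + 2 * (y:ℂ) * (p:ℂ) * ((ζ:ℂ) - 1)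
        = ((A * y ^ 2 * (ζ ^ 2 - 1) + 2 * y * p * (ζ - 1) : ℝ) : ℂ) := by push_cast; ring
    rw [bigPsi, harg, hKdef]
  -- the inner double-integrand
  set Fi : ℝ → ℝ → ℂ := fun t x =>
    f x * (starRingEnd ℂ) (ψ ((x - t) / ζ)) * e1 t x * ker ω t with hFidef
  -- integrability on the product
  have hψc : Integrable (fun u : ℝ => (starRingEnd ℂ) (ψ u)) := by
    rw [← integrable_norm_iff]
    · simpa using hψ1.norm
    · exact Complex.continuous_conj.comp_aestronglyMeasurable hψ1.aestronglyMeasurable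
  have hgψ : Integrable (fun v : ℝ => (starRingEnd ℂ) (ψ (-ζ⁻¹ * v))) :=
    hψc.comp_mul_left' (by simp [hζ'] : (-ζ⁻¹ : ℝ) ≠ 0)
  have hH : Integrable (fun z : ℝ × ℝ =>
      f z.2 * (starRingEnd ℂ) (ψ (-ζ⁻¹ * (z.1 - z.2)))) (volume.prod volume) := by
    have := hf1.convolution_integrand (ContinuousLinearMap.mul ℝ ℂ) hgψ
    simpa using this
  have hargs : ∀ t x : ℝ, ((x - t) / ζ : ℝ) = -ζ⁻¹ * (t - x) := by
    intro t x; field_simp; ring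
  have hcont : Continuous (fun z : ℝ × ℝ => e1 z.1 z.2 * ker ω z.1) := by
    rw [he1def, hkerdef]
    fun_prop
  have hInt : Integrable (Function.uncurry Fi) (volume.prod volume) := by
    refine hH.norm.mono' ?_ ?_
    · have : (Function.uncurry Fi) = fun z : ℝ × ℝ =>
          (f z.2 * (starRingEnd ℂ) (ψ (-ζ⁻¹ * (z.1 - z.2)))) * (e1 z.1 z.2 * ker ω z.1) := by
        funext z
        simp only [Function.uncurry, hFidef, hargs z.1 z.2]
        ring
      rw [this]
      exact hH.aestronglyMeasurable.mul hcont.aestronglyMeasurable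
    · refine Filter.Eventually.of_forall fun z => ?_
      simp only [Function.uncurry, hFidef, hargs z.1 z.2, norm_mul]
      rw [he1def, hkerdef, hKdef]
      simp only [norm_expK]
      simp
  -- rewrite the LHS integrand
  have hLHS1 : SAFT A B D p q (fun t : ℝ => NSAWT A B ψ f t ζ) ω
      = (cB : ℂ) * (((cB * sζ : ℝ) : ℂ) * ∫ t : ℝ, ∫ x : ℝ, Fi t x) := by
    rw [hSAFT]
    congr 1
    rw [← MeasureTheory.integral_const_mul]
    refine integral_congr_ae (Filter.Eventually.of_forall fun t => ?_)
    simp only [NSAWT]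
    have : ∀ x : ℝ, f x * (starRingEnd ℂ) (waveWindow A B ψ t ζ x)
        = ((cB * sζ : ℝ) : ℂ) * (f x * (starRingEnd ℂ) (ψ ((x - t) / ζ)) * e1 t x) := by
      intro x; rw [hconjW]; ring
    simp_rw [this]
    rw [MeasureTheory.integral_const_mul, mul_assoc]
    congr 1
    rw [← MeasureTheory.integral_mul_const]
  -- swap, change variables and factor
  have hswap : (∫ t : ℝ, ∫ x : ℝ, Fi t x) = ∫ x : ℝ, ∫ t : ℝ, Fi t x :=
    integral_integral_swap hInt
  -- the y-integral (SAFT integrand of bigPsi at ζω)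
  set J : ℂ := ∫ y : ℝ, bigPsi A B p ψ ζ y * ker (ζ * ω) y with hJdef
  have hexp : ∀ x y : ℝ, e1 (x + ζ * y) x * ker ω (x + ζ * y)
      = ker ω x * phase *
        (Complex.exp (K * ((A * y ^ 2 * (ζ ^ 2 - 1) + 2 * y * p * (ζ - 1) : ℝ) : ℂ)) *
          ker (ζ * ω) y) := by
    intro x y
    rw [he1def, hkerdef, hphasedef]
    simp only []
    rw [expK_mul, expK_mul, mul_assoc, expK_mul, expK_mul]
    congr 2
    push_cast
    ring
  have hinner : ∀ x : ℝ, (∫ t : ℝ, Fi t x) = f x * (ζ • (ker ω x * phase * J)) := by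
    intro x
    have h1 : (∫ t : ℝ, Fi t x) = f x * ∫ t : ℝ,
        (starRingEnd ℂ) (ψ ((x - t) / ζ)) * e1 t x * ker ω t := by
      rw [← MeasureTheory.integral_const_mul]
      refine integral_congr_ae (Filter.Eventually.of_forall fun t => ?_)
      rw [hFidef]; ring
    rw [h1]
    congr 1
    -- change of variables t = x + ζ y
    have h2 : (∫ t : ℝ, (starRingEnd ℂ) (ψ ((x - t) / ζ)) * e1 t x * ker ω t)
        = ζ • ∫ y : ℝ, (starRingEnd ℂ) (ψ ((x - (x + ζ * y)) / ζ)) *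
            e1 (x + ζ * y) x * ker ω (x + ζ * y) := by
      set g : ℝ → ℂ := fun t => (starRingEnd ℂ) (ψ ((x - t) / ζ)) * e1 t x * ker ω t with hg
      have h3 : (∫ y : ℝ, g (x + ζ * y)) = |ζ⁻¹| • ∫ u : ℝ, g (x + u) :=
        MeasureTheory.Measure.integral_comp_mul_left (fun u => g (x + u)) ζ
      rw [show (∫ y : ℝ, (starRingEnd ℂ) (ψ ((x - (x + ζ * y)) / ζ)) *
            e1 (x + ζ * y) x * ker ω (x + ζ * y)) = ∫ y : ℝ, g (x + ζ * y) from rfl,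
        h3, MeasureTheory.integral_add_left_eq_self (fun u => g u) x,
        abs_of_pos (inv_pos.2 hζ), smul_smul, mul_inv_cancel₀ hζ', one_smul]
    rw [h2]
    congr 1
    have h4 : ∀ y : ℝ, (starRingEnd ℂ) (ψ ((x - (x + ζ * y)) / ζ)) *
        e1 (x + ζ * y) x * ker ω (x + ζ * y)
        = ker ω x * phase * (bigPsi A B p ψ ζ y * ker (ζ * ω) y) := by
      intro y
      have harg : ((x - (x + ζ * y)) / ζ : ℝ) = -y := by field_simp; ring
      rw [harg, hbigPsi]
      calc (starRingEnd ℂ) (ψ (-y)) * e1 (x + ζ * y) x * ker ω (x + ζ * y)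
          = (e1 (x + ζ * y) x * ker ω (x + ζ * y)) * (starRingEnd ℂ) (ψ (-y)) := by ring
        _ = (ker ω x * phase *
              (Complex.exp (K * ((A * y ^ 2 * (ζ ^ 2 - 1) + 2 * y * p * (ζ - 1) : ℝ) : ℂ)) *
                ker (ζ * ω) y)) * (starRingEnd ℂ) (ψ (-y)) := by rw [hexp]
        _ = _ := by ring
    simp_rw [h4]
    rw [hJdef, MeasureTheory.integral_const_mul]
  -- assemble
  rw [hLHS1, hswap]
  simp_rw [hinner]
  have hpull : (∫ x : ℝ, f x * (ζ • (ker ω x * phase * J)))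
      = (ζ : ℂ) * phase * J * ∫ x : ℝ, f x * ker ω x := by
    rw [← MeasureTheory.integral_const_mul]
    refine integral_congr_ae (Filter.Eventually.of_forall fun x => ?_)
    simp only [Complex.real_smul]
    ring
  rw [hpull, hSAFT f ω, hSAFT (bigPsi A B p ψ ζ) (ζ * ω), ← hJdef]
  have hphase : Complex.exp ((Complex.I / (2 * (B : ℂ))) *
      (2 * (ω : ℂ) * (ζ : ℂ) * ((D : ℂ) * (p : ℂ) - (B : ℂ) * (q : ℂ))
        - (D : ℂ) * (ω : ℂ) ^ 2 * (ζ : ℂ) ^ 2)) = phase := by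
    rw [hphasedef, hKdef]
    congr 1
    push_cast
    ring
  rw [hphase]
  have hsq : (Real.sqrt ζ : ℂ) * (Real.sqrt ζ : ℂ) = (ζ : ℂ) := by
    rw [← Complex.ofReal_mul, Real.mul_self_sqrt hζ.le]
  have hsne : (Real.sqrt ζ : ℂ) ≠ 0 :=
    Complex.ofReal_ne_zero.mpr (Real.sqrt_ne_zero'.mpr hζ)
  rw [hsζ]
  push_cast
  field_simp
  linear_combination -((cB:ℂ) * (cB:ℂ) * phase * J * (∫ x : ℝ, f x * ker ω x)) * hsq
end
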